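/- arXiv:2212.13701 — 6 statements merged into one kernel-verified Lean document; each statement's English description precedes it below -/
import Mathlib

section
/- Let θ₁, θ₂, θ₃, θ₄, θ₅ be nonnegative real numbers such that θ_j + θ_k < 2π for all j ≠ k. Then (1/8)(Σ_{j=1}^{5} θ_j⁴ + 4 Σ_{1≤j<k≤5} θ_j² θ_k² − 24π² Σ_{j=1}^{5} θ_j² + 80π⁴) > 0. -/
open Real Finset

/-- Core two-variable inequality: if `0 ≤ a < 2π`, `0 ≤ T ≤ 4a²` and `T < 4(2π−a)²`, then
`2T² + T(3a² − 24π²) + a⁴ − 24π²a² + 80π⁴ > 0`. -/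
lemma mirzakhani_quad_aux (a T : ℝ) (ha : 0 ≤ a) (ha2 : a < 2 * π) (hT : 0 ≤ T)
    (hT1 : T ≤ 4 * a ^ 2) (hT2 : T < 4 * (2 * π - a) ^ 2) :
    0 < 2 * T ^ 2 + T * (3 * a ^ 2 - 24 * π ^ 2) + a ^ 4 - 24 * π ^ 2 * a ^ 2 + 80 * π ^ 4 := by
  have hπ := Real.pi_pos
  rcases le_or_gt a π with h | h
  · nlinarith [mul_nonneg (sub_nonneg.2 hT1) (by nlinarith : (0:ℝ) ≤ 24 * π ^ 2 - 2 * T - 11 * a ^ 2),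
      mul_nonneg (by nlinarith : (0:ℝ) ≤ π ^ 2 - a ^ 2) (by nlinarith : (0:ℝ) ≤ 5 * π ^ 2 - 3 * a ^ 2),
      sq_nonneg π, pow_pos hπ 4]
  · have hu1 : 0 < 2 * π - a := by linarith
    have hu2 : 2 * π - a ≤ π := by linarith
    have hchi : (0:ℝ) ≤ 45*(2*π-a)^3 - 56*π*(2*π-a)^2 - 48*π^2*(2*π-a) + 64*π^3 := by
      have h1 : (0:ℝ) ≤ 59*π^2 + 11*π*(2*π-a) - 45*(2*π-a)^2 := by
        nlinarith [mul_nonneg hu1.le (sub_nonneg.2 hu2)]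
      nlinarith [mul_nonneg (by linarith : (0:ℝ) ≤ π - (2*π-a)) h1, pow_pos hπ 3]
    nlinarith [mul_pos (sub_pos.2 hT2)
        (by nlinarith : (0:ℝ) < 12 * π ^ 2 + 12 * π * (2*π-a) - 11 * (2*π-a) ^ 2 - 2 * T),
      mul_nonneg hu1.le hchi, pow_pos hπ 4]

set_option maxHeartbeats 1000000 in
/-- Five-variable version with `a` the largest angle. -/
lemma mirzakhani_key (a b c d e : ℝ) (ha : 0 ≤ a) (hb : 0 ≤ b) (hc : 0 ≤ c)
    (hd : 0 ≤ d) (he : 0 ≤ e)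
    (hba : b ≤ a) (hca : c ≤ a) (hda : d ≤ a) (hea : e ≤ a)
    (hab : a + b < 2 * π) (hac : a + c < 2 * π) (had : a + d < 2 * π)
    (hae : a + e < 2 * π) :
    0 < (a^4 + b^4 + c^4 + d^4 + e^4)
      + 4 * (a^2*b^2 + a^2*c^2 + a^2*d^2 + a^2*e^2 + b^2*c^2 + b^2*d^2 + b^2*e^2
          + c^2*d^2 + c^2*e^2 + d^2*e^2)
      - 24 * π^2 * (a^2 + b^2 + c^2 + d^2 + e^2) + 80 * π^4 := by
  have ha2 : a < 2 * π := by linarith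
  have hT : (0:ℝ) ≤ b^2 + c^2 + d^2 + e^2 := by positivity
  have hT1 : b^2 + c^2 + d^2 + e^2 ≤ 4 * a ^ 2 := by
    nlinarith [mul_self_nonneg (a-b), mul_self_nonneg (a-c),
      mul_self_nonneg (a-d), mul_self_nonneg (a-e)]
  have hT2 : b^2 + c^2 + d^2 + e^2 < 4 * (2 * π - a) ^ 2 := by
    have h1 : b ^ 2 < (2 * π - a) ^ 2 := pow_lt_pow_left₀ (by linarith) hb (by norm_num)
    have h2 : c ^ 2 < (2 * π - a) ^ 2 := pow_lt_pow_left₀ (by linarith) hc (by norm_num)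
    have h3 : d ^ 2 < (2 * π - a) ^ 2 := pow_lt_pow_left₀ (by linarith) hd (by norm_num)
    have h4 : e ^ 2 < (2 * π - a) ^ 2 := pow_lt_pow_left₀ (by linarith) he (by norm_num)
    linarith
  have hq := mirzakhani_quad_aux a (b^2 + c^2 + d^2 + e^2) ha ha2 hT hT1 hT2
  have h4b : b^2 * b^2 ≤ a^2 * b^2 :=
    mul_le_mul_of_nonneg_right (by nlinarith) (sq_nonneg b)
  have h4c : c^2 * c^2 ≤ a^2 * c^2 :=
    mul_le_mul_of_nonneg_right (by nlinarith) (sq_nonneg c)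
  have h4d : d^2 * d^2 ≤ a^2 * d^2 :=
    mul_le_mul_of_nonneg_right (by nlinarith) (sq_nonneg d)
  have h4e : e^2 * e^2 ≤ a^2 * e^2 :=
    mul_le_mul_of_nonneg_right (by nlinarith) (sq_nonneg e)
  linarith [hq, h4b, h4c, h4d, h4e]

/-- If nonnegative cone angles `θ₁,…,θ₅` satisfy `θ_j + θ_k < 2π` for all `j ≠ k`, then
the evaluation of Mirzakhani's genus-zero five-point volume polynomial at `L_j = iθ_j`,
namely `(1/8)(Σ θ_j⁴ + 4 Σ_{j<k} θ_j²θ_k² − 24π² Σ θ_j² + 80π⁴)`, is positive. -/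
theorem stmt_4 (θ : Fin 5 → ℝ) (hθ : ∀ j, 0 ≤ θ j)
    (hsum : ∀ j k, j ≠ k → θ j + θ k < 2 * π) :
    0 < (1 / 8 : ℝ) * ((∑ j, θ j ^ 4) +
        4 * ∑ j, ∑ k ∈ Finset.univ.filter (fun k => j < k), θ j ^ 2 * θ k ^ 2 -
        24 * π ^ 2 * ∑ j, θ j ^ 2 + 80 * π ^ 4) := by
  have hpair : (∑ j, ∑ k ∈ Finset.univ.filter (fun k => j < k), θ j ^ 2 * θ k ^ 2) =
      θ 0 ^2*θ 1^2 + θ 0^2*θ 2^2 + θ 0^2*θ 3^2 + θ 0^2*θ 4^2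
      + θ 1^2*θ 2^2 + θ 1^2*θ 3^2 + θ 1^2*θ 4^2
      + θ 2^2*θ 3^2 + θ 2^2*θ 4^2 + θ 3^2*θ 4^2 := by
    rw [Fin.sum_univ_five]
    rw [show (Finset.univ.filter (fun k => (0:Fin 5) < k)) = {1,2,3,4} from by decide]
    rw [show (Finset.univ.filter (fun k => (1:Fin 5) < k)) = {2,3,4} from by decide]
    rw [show (Finset.univ.filter (fun k => (2:Fin 5) < k)) = {3,4} from by decide]
    rw [show (Finset.univ.filter (fun k => (3:Fin 5) < k)) = {4} from by decide]
    rw [show (Finset.univ.filter (fun k => (4:Fin 5) < k)) = ∅ from by decide]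
    simp [Finset.sum_insert, Finset.mem_insert]
    ring
  rw [hpair, Fin.sum_univ_five (fun j => θ j ^ 4), Fin.sum_univ_five (fun j => θ j ^ 2)]
  obtain ⟨j, hj⟩ : ∃ j, ∀ k, θ k ≤ θ j := Finite.exists_max θ
  fin_cases j
  · have h := mirzakhani_key (θ 0) (θ 1) (θ 2) (θ 3) (θ 4) (hθ 0) (hθ 1) (hθ 2) (hθ 3) (hθ 4)
      (hj 1) (hj 2) (hj 3) (hj 4)
      (hsum 0 1 (by decide)) (hsum 0 2 (by decide)) (hsum 0 3 (by decide)) (hsum 0 4 (by decide))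
    linarith [h]
  · have h := mirzakhani_key (θ 1) (θ 0) (θ 2) (θ 3) (θ 4) (hθ 1) (hθ 0) (hθ 2) (hθ 3) (hθ 4)
      (hj 0) (hj 2) (hj 3) (hj 4)
      (hsum 1 0 (by decide)) (hsum 1 2 (by decide)) (hsum 1 3 (by decide)) (hsum 1 4 (by decide))
    linarith [h]
  · have h := mirzakhani_key (θ 2) (θ 0) (θ 1) (θ 3) (θ 4) (hθ 2) (hθ 0) (hθ 1) (hθ 3) (hθ 4)
      (hj 0) (hj 1) (hj 3) (hj 4)
      (hsum 2 0 (by decide)) (hsum 2 1 (by decide)) (hsum 2 3 (by decide)) (hsum 2 4 (by decide))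
    linarith [h]
  · have h := mirzakhani_key (θ 3) (θ 0) (θ 1) (θ 2) (θ 4) (hθ 3) (hθ 0) (hθ 1) (hθ 2) (hθ 4)
      (hj 0) (hj 1) (hj 2) (hj 4)
      (hsum 3 0 (by decide)) (hsum 3 1 (by decide)) (hsum 3 2 (by decide)) (hsum 3 4 (by decide))
    linarith [h]
  · have h := mirzakhani_key (θ 4) (θ 0) (θ 1) (θ 2) (θ 3) (hθ 4) (hθ 0) (hθ 1) (hθ 2) (hθ 3)
      (hj 0) (hj 1) (hj 2) (hj 3)
      (hsum 4 0 (by decide)) (hsum 4 1 (by decide)) (hsum 4 2 (by decide)) (hsum 4 3 (by decide))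
    linarith [h]
end

section
/- Let θ₁, θ₂, θ₃, θ₄, θ₅ be real numbers with 0 ≤ θ_j ≤ π for each j. Then (1/8)(Σ_{j=1}^{5} θ_j⁴ + 4 Σ_{1≤j<k≤5} θ_j² θ_k² − 24π² Σ_{j=1}^{5} θ_j² + 80π⁴) > 0. -/
open Real Finset

/-- If the cone angles `θ₁,…,θ₅` satisfy `0 ≤ θ_j ≤ π` for each `j`, then the evaluation
of Mirzakhani's genus-zero five-point volume polynomial at `L_j = iθ_j`, namely
`(1/8)(Σ θ_j⁴ + 4 Σ_{j<k} θ_j²θ_k² − 24π² Σ θ_j² + 80π⁴)`, is positive. -/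
theorem stmt_5 (θ : Fin 5 → ℝ) (h0 : ∀ j, 0 ≤ θ j) (hπ : ∀ j, θ j ≤ π) :
    0 < (1 / 8 : ℝ) * ((∑ j, θ j ^ 4) +
        4 * ∑ j, ∑ k ∈ Finset.univ.filter (fun k => j < k), θ j ^ 2 * θ k ^ 2 -
        24 * π ^ 2 * ∑ j, θ j ^ 2 + 80 * π ^ 4) := by
  have hb : ∀ j, θ j ^ 2 ≤ π ^ 2 := fun j =>
    sq_le_sq' (by linarith [h0 j, hπ j, Real.pi_pos]) (hπ j)
  simp only [Fin.sum_univ_five,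
    show (Finset.univ.filter (fun k => (0:Fin 5) < k)) = {1,2,3,4} by decide,
    show (Finset.univ.filter (fun k => (1:Fin 5) < k)) = {2,3,4} by decide,
    show (Finset.univ.filter (fun k => (2:Fin 5) < k)) = {3,4} by decide,
    show (Finset.univ.filter (fun k => (3:Fin 5) < k)) = {4} by decide,
    show (Finset.univ.filter (fun k => (4:Fin 5) < k)) = ∅ by decide]
  simp [Finset.sum_insert, Finset.mem_insert]
  have key : ∀ j, 0 ≤ θ j ^ 2 * (π ^ 2 - θ j ^ 2) := fun j =>
    mul_nonneg (sq_nonneg _) (by linarith [hb j])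
  nlinarith [key 0, key 1, key 2, key 3, key 4,
    sq_nonneg (θ 0^2 + θ 1^2 + θ 2^2 + θ 3^2 + θ 4^2 - 25/4 * π^2),
    pow_pos Real.pi_pos 4]
end

section
/- Let κ < 2 be a real number and let x, y, z be real numbers with x ≥ 2, y ≥ 2, z ≥ 2 and x² + y² + z² − xyz − 2 = κ. Then yz − x > 2. -/
/-- On the Teichmüller component `{x,y,z ≥ 2, x² + y² + z² − xyz − 2 = κ}` with `κ < 2`,
the involution `(x,y,z) ↦ (yz−x, y, z)` satisfies `yz − x > 2`, hence maps the component
into itself. -/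
theorem stmt_14 (κ x y z : ℝ) (hκ : κ < 2) (hx : 2 ≤ x) (hy : 2 ≤ y) (hz : 2 ≤ z)
    (h : x ^ 2 + y ^ 2 + z ^ 2 - x * y * z - 2 = κ) :
    2 < y * z - x := by
  -- key identity: (x-2)*((y*z-x)-2) = (y-z)^2 + 2 - κ > 0
  have key : (x - 2) * ((y * z - x) - 2) = (y - z) ^ 2 + 2 - κ := by nlinarith [h]
  have hpos : (x - 2) * ((y * z - x) - 2) > 0 := by nlinarith [sq_nonneg (y - z)]
  nlinarith [mul_pos (sub_pos.mpr (show (2:ℝ) < x by nlinarith [sq_nonneg (y-z), hpos])) hpos]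
end

section
/- Let κ < 2 be a real number and let x, y, z be real numbers with x ≥ 2, y ≥ 2, z ≥ 2 and x² + y² + z² − xyz − 2 = κ. Then it is impossible that both 2x ≥ yz and 2y ≥ zx hold; equivalently, at most one of the homogeneous coordinates r = x/(yz), s = y/(zx), t = z/(xy) can be ≥ 1/2. -/
/-- On the Teichmüller component `{x,y,z ≥ 2, x² + y² + z² − xyz − 2 = κ}` with `κ < 2`,
it is impossible that both `2x ≥ yz` and `2y ≥ zx` hold; equivalently, at most one of the
homogeneous coordinates `r = x/(yz)`, `s = y/(zx)`, `t = z/(xy)` can be `≥ 1/2`. -/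
theorem stmt_15 (κ x y z : ℝ) (hκ : κ < 2) (hx : 2 ≤ x) (hy : 2 ≤ y) (hz : 2 ≤ z)
    (h : x ^ 2 + y ^ 2 + z ^ 2 - x * y * z - 2 = κ) :
    ¬(y * z ≤ 2 * x ∧ z * x ≤ 2 * y) := by
  rintro ⟨h1, h2⟩
  nlinarith [sq_nonneg (x - y), sq_nonneg (z - 2), mul_pos (lt_of_lt_of_le zero_lt_two hx) (lt_of_lt_of_le zero_lt_two hy), sq_nonneg (x*z - 2*y), sq_nonneg (y*z - 2*x)]
end

section
/- Let κ ∈ (−2,2). Let φ₁, φ₂, φ₃ be the bijections of ℝ³ given by φ₁(x,y,z) = (yz−x, y, z), φ₂(x,y,z) = (x, y, xy−z), φ₃(x,y,z) = (x, xz−y, z) (each is an involution), and let G be the group of bijections of ℝ³ generated by φ₁, φ₂, φ₃. Then for every (x,y,z) ∈ ℝ³ with x ≥ 2, y ≥ 2, z ≥ 2 and x² + y² + z² − xyz − 2 = κ, there exists exactly one point (x′,y′,z′) in the G-orbit of (x,y,z) satisfying 2x′ ≤ y′z′, 2y′ ≤ z′x′, and 2z′ ≤ x′y′. -/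
/-- The involution `φ₁(x,y,z) = (yz−x, y, z)` of `ℝ³`. -/
noncomputable def phi1 : Equiv.Perm (ℝ × ℝ × ℝ) :=
  Function.Involutive.toPerm (fun p => (p.2.1 * p.2.2 - p.1, p.2.1, p.2.2))
    (fun p => by obtain ⟨x, y, z⟩ := p; simp)

/-- The involution `φ₂(x,y,z) = (x, y, xy−z)` of `ℝ³`. -/
noncomputable def phi2 : Equiv.Perm (ℝ × ℝ × ℝ) :=
  Function.Involutive.toPerm (fun p => (p.1, p.2.1, p.1 * p.2.1 - p.2.2))
    (fun p => by obtain ⟨x, y, z⟩ := p; simp)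

/-- The involution `φ₃(x,y,z) = (x, xz−y, z)` of `ℝ³`. -/
noncomputable def phi3 : Equiv.Perm (ℝ × ℝ × ℝ) :=
  Function.Involutive.toPerm (fun p => (p.1, p.1 * p.2.2 - p.2.1, p.2.2))
    (fun p => by obtain ⟨x, y, z⟩ := p; simp)

namespace Stmt17

lemma key {κ a b c : ℝ} (hκ₂ : κ < 2)
    (ha : 2 ≤ a) (hb : 2 ≤ b) (hc : 2 ≤ c)
    (hl : a^2 + b^2 + c^2 - a*b*c - 2 = κ) :
    2 < a ∧ 2 < b*c - a ∧
    (c*(b*c - a) < 2*b → 2*(2-κ) ≤ b*(2*a - b*c)) ∧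
    ((b*c - a)*b < 2*c → 2*(2-κ) ≤ c*(2*a - b*c)) := by
  have hid : (a-2)*(b*c-a-2) = (b-c)^2 + (2-κ) := by linear_combination -hl
  have hbc : 4 ≤ b*c := by nlinarith
  refine ⟨?_, ?_, ?_, ?_⟩
  · nlinarith [sq_nonneg (b-c)]
  · nlinarith [sq_nonneg (b-c)]
  · intro h
    have e1 : a*(c*(b*c-a)) = c*(b^2+c^2-2-κ) := by linear_combination (-c) * hl
    have h5 : c*(b^2+c^2-2-κ) < 2*(a*b) := by
      have := mul_lt_mul_of_pos_left h (show (0:ℝ) < a by linarith)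
      linarith [e1]
    have h6 : (0:ℝ) ≤ (c-2)*(c^2+2*c+2-κ) :=
      mul_nonneg (by linarith) (by nlinarith)
    nlinarith [h5, h6]
  · intro h
    have e1 : a*((b*c-a)*b) = b*(b^2+c^2-2-κ) := by linear_combination (-b) * hl
    have h5 : b*(b^2+c^2-2-κ) < 2*(a*c) := by
      have := mul_lt_mul_of_pos_left h (show (0:ℝ) < a by linarith)
      linarith [e1]
    have h6 : (0:ℝ) ≤ (b-2)*(b^2+2*b+2-κ) :=
      mul_nonneg (by linarith) (by nlinarith)
    nlinarith [h5, h6]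

lemma obad {a b c : ℝ} (hb : 2 ≤ b) (hc : 2 ≤ c)
    (h1 : b*c < 2*a) (h2 : c*a < 2*b) : False := by
  nlinarith [mul_pos (show (0:ℝ) < c by linarith) (show (0:ℝ) < 2*a - b*c by linarith),
    mul_nonneg (show (0:ℝ) ≤ b by linarith) (show (0:ℝ) ≤ c^2 - 4 by nlinarith)]

def IsGood (κ : ℝ) (p : ℝ × ℝ × ℝ) : Prop :=
  2 ≤ p.1 ∧ 2 ≤ p.2.1 ∧ 2 ≤ p.2.2 ∧
    p.1^2 + p.2.1^2 + p.2.2^2 - p.1*p.2.1*p.2.2 - 2 = κ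

def InD (p : ℝ × ℝ × ℝ) : Prop :=
  2*p.1 ≤ p.2.1*p.2.2 ∧ 2*p.2.1 ≤ p.2.2*p.1 ∧ 2*p.2.2 ≤ p.1*p.2.1

/-- `Reach q0 p` : the canonical descent from `p` terminates at `q0`. -/
inductive Reach (q0 : ℝ × ℝ × ℝ) : ℝ × ℝ × ℝ → Prop
  | base : Reach q0 q0
  | s1 (p : ℝ × ℝ × ℝ) (h : p.2.1 * p.2.2 < 2 * p.1) (hr : Reach q0 (phi1 p)) : Reach q0 p
  | s2 (p : ℝ × ℝ × ℝ) (h : p.2.2 * p.1 < 2 * p.2.1) (hr : Reach q0 (phi3 p)) : Reach q0 p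
  | s3 (p : ℝ × ℝ × ℝ) (h : p.1 * p.2.1 < 2 * p.2.2) (hr : Reach q0 (phi2 p)) : Reach q0 p

lemma exist_aux {κ : ℝ} (hκ₂ : κ < 2) (S : ℝ) (hS : 0 < S) :
    ∀ n : ℕ, ∀ x y z : ℝ, IsGood κ (x,y,z) → x + y + z ≤ S →
      x + y + z ≤ 6 + n * (2*(2-κ)/S) →
      ∃ q, IsGood κ q ∧ InD q ∧ Reach q (x,y,z) := by
  intro n
  induction n with
  | zero =>
    intro x y z hg _ hsum
    obtain ⟨hx, hy, hz, hl⟩ := hg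
    dsimp only at hx hy hz hl
    have h1 : 2 < x := (key hκ₂ hx hy hz hl).1
    have h2 : 2 < y := (key hκ₂ hy hz hx (by linear_combination hl)).1
    have h3 : 2 < z := (key hκ₂ hz hx hy (by linear_combination hl)).1
    norm_num at hsum
    linarith
  | succ n ih =>
    intro x y z hg hS' hsum
    obtain ⟨hx, hy, hz, hl⟩ := hg
    dsimp only at hx hy hz hl
    by_cases hc1 : 2*x ≤ y*z
    · by_cases hc2 : 2*y ≤ z*x
      · by_cases hc3 : 2*z ≤ x*y
        · exact ⟨(x,y,z), ⟨hx,hy,hz,hl⟩, ⟨hc1,hc2,hc3⟩, Reach.base⟩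
        · -- fail3 : x*y < 2*z, flip z via phi2
          push_neg at hc3
          have K := key hκ₂ hz hx hy (by linear_combination hl)
          have hgq : IsGood κ (x, y, x*y-z) :=
            ⟨hx, hy, le_of_lt K.2.1, by linear_combination hl⟩
          have hstep : phi2 (x,y,z) = (x, y, x*y-z) := rfl
          have hq3 : 2*(x*y-z) ≤ x*y := by linarith
          by_cases hq1 : 2*x ≤ y*(x*y-z)
          · by_cases hq2 : 2*y ≤ (x*y-z)*x
            · exact ⟨(x,y,x*y-z), hgq, ⟨hq1, hq2, hq3⟩,
                Reach.s3 (x,y,z) hc3 (hstep ▸ Reach.base)⟩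
            · push_neg at hq2
              have hd := K.2.2.2 hq2
              have hdec : 2*(2-κ)/S ≤ 2*z - x*y := by
                rw [div_le_iff₀ hS]
                nlinarith [mul_nonneg (show (0:ℝ) ≤ 2*z - x*y by linarith)
                  (show (0:ℝ) ≤ S - y by linarith)]
              obtain ⟨q, hq, hqD, hqR⟩ := ih x y (x*y-z) hgq (by linarith)
                (by push_cast at hsum ⊢; linarith)
              exact ⟨q, hq, hqD, Reach.s3 (x,y,z) hc3 (hstep ▸ hqR)⟩
          · push_neg at hq1
            have hd := K.2.2.1 hq1
            have hdec : 2*(2-κ)/S ≤ 2*z - x*y := by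
              rw [div_le_iff₀ hS]
              nlinarith [mul_nonneg (show (0:ℝ) ≤ 2*z - x*y by linarith)
                (show (0:ℝ) ≤ S - x by linarith)]
            obtain ⟨q, hq, hqD, hqR⟩ := ih x y (x*y-z) hgq (by linarith)
              (by push_cast at hsum ⊢; linarith)
            exact ⟨q, hq, hqD, Reach.s3 (x,y,z) hc3 (hstep ▸ hqR)⟩
      · -- fail2 : z*x < 2*y, flip y via phi3
        push_neg at hc2
        have K := key hκ₂ hy hz hx (by linear_combination hl)
        have hgq : IsGood κ (x, x*z-y, z) :=
          ⟨hx, by dsimp only; linarith [K.2.1], hz, by linear_combination hl⟩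
        have hstep : phi3 (x,y,z) = (x, x*z-y, z) := rfl
        have hq2 : 2*(x*z-y) ≤ z*x := by linarith
        by_cases hq1 : 2*x ≤ (x*z-y)*z
        · by_cases hq3 : 2*z ≤ x*(x*z-y)
          · exact ⟨(x,x*z-y,z), hgq, ⟨hq1, hq2, hq3⟩,
              Reach.s2 (x,y,z) hc2 (hstep ▸ Reach.base)⟩
          · push_neg at hq3
            have hd := K.2.2.1 (by linarith : x*(z*x-y) < 2*z)
            have hdec : 2*(2-κ)/S ≤ 2*y - z*x := by
              rw [div_le_iff₀ hS]
              nlinarith [mul_nonneg (show (0:ℝ) ≤ 2*y - z*x by linarith)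
                (show (0:ℝ) ≤ S - z by linarith)]
            obtain ⟨q, hq, hqD, hqR⟩ := ih x (x*z-y) z hgq (by linarith)
              (by push_cast at hsum ⊢; linarith)
            exact ⟨q, hq, hqD, Reach.s2 (x,y,z) hc2 (hstep ▸ hqR)⟩
        · push_neg at hq1
          have hd := K.2.2.2 (by linarith : (z*x-y)*z < 2*x)
          have hdec : 2*(2-κ)/S ≤ 2*y - z*x := by
            rw [div_le_iff₀ hS]
            nlinarith [mul_nonneg (show (0:ℝ) ≤ 2*y - z*x by linarith)
              (show (0:ℝ) ≤ S - x by linarith)]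
          obtain ⟨q, hq, hqD, hqR⟩ := ih x (x*z-y) z hgq (by linarith)
            (by push_cast at hsum ⊢; linarith)
          exact ⟨q, hq, hqD, Reach.s2 (x,y,z) hc2 (hstep ▸ hqR)⟩
    · -- fail1 : y*z < 2*x, flip x via phi1
      push_neg at hc1
      have K := key hκ₂ hx hy hz hl
      have hgq : IsGood κ (y*z-x, y, z) :=
        ⟨le_of_lt K.2.1, hy, hz, by linear_combination hl⟩
      have hstep : phi1 (x,y,z) = (y*z-x, y, z) := rfl
      have hq1 : 2*(y*z-x) ≤ y*z := by linarith
      by_cases hq2 : 2*y ≤ z*(y*z-x)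
      · by_cases hq3 : 2*z ≤ (y*z-x)*y
        · exact ⟨(y*z-x,y,z), hgq, ⟨hq1, hq2, hq3⟩,
            Reach.s1 (x,y,z) hc1 (hstep ▸ Reach.base)⟩
        · push_neg at hq3
          have hd := K.2.2.2 hq3
          have hdec : 2*(2-κ)/S ≤ 2*x - y*z := by
            rw [div_le_iff₀ hS]
            nlinarith [mul_nonneg (show (0:ℝ) ≤ 2*x - y*z by linarith)
              (show (0:ℝ) ≤ S - z by linarith)]
          obtain ⟨q, hq, hqD, hqR⟩ := ih (y*z-x) y z hgq (by linarith)
            (by push_cast at hsum ⊢; linarith)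
          exact ⟨q, hq, hqD, Reach.s1 (x,y,z) hc1 (hstep ▸ hqR)⟩
      · push_neg at hq2
        have hd := K.2.2.1 hq2
        have hdec : 2*(2-κ)/S ≤ 2*x - y*z := by
          rw [div_le_iff₀ hS]
          nlinarith [mul_nonneg (show (0:ℝ) ≤ 2*x - y*z by linarith)
            (show (0:ℝ) ≤ S - y by linarith)]
        obtain ⟨q, hq, hqD, hqR⟩ := ih (y*z-x) y z hgq (by linarith)
          (by push_cast at hsum ⊢; linarith)
        exact ⟨q, hq, hqD, Reach.s1 (x,y,z) hc1 (hstep ▸ hqR)⟩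


lemma reach_exists_g {q0 p : ℝ × ℝ × ℝ} (h : Reach q0 p) :
    ∃ g ∈ Subgroup.closure {phi1, phi2, phi3}, g p = q0 := by
  induction h with
  | base => exact ⟨1, one_mem _, rfl⟩
  | s1 p h hr ih =>
    obtain ⟨g, hg, hgp⟩ := ih
    exact ⟨g * phi1, mul_mem hg (Subgroup.subset_closure (by simp)),
      by simpa [Equiv.Perm.mul_apply] using hgp⟩
  | s2 p h hr ih =>
    obtain ⟨g, hg, hgp⟩ := ih
    exact ⟨g * phi3, mul_mem hg (Subgroup.subset_closure (by simp)),
      by simpa [Equiv.Perm.mul_apply] using hgp⟩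
  | s3 p h hr ih =>
    obtain ⟨g, hg, hgp⟩ := ih
    exact ⟨g * phi2, mul_mem hg (Subgroup.subset_closure (by simp)),
      by simpa [Equiv.Perm.mul_apply] using hgp⟩

lemma step_phi1 {κ : ℝ} (hκ₂ : κ < 2) {q0 p : ℝ × ℝ × ℝ} (hΔ : InD q0)
    (hg : IsGood κ p) (hr : Reach q0 p) :
    IsGood κ (phi1 p) ∧ Reach q0 (phi1 p) := by
  obtain ⟨x, y, z⟩ := p
  obtain ⟨hx, hy, hz, hl⟩ := hg
  dsimp only at hx hy hz hl
  have K := key hκ₂ hx hy hz hl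
  have hstep : phi1 (x,y,z) = (y*z-x, y, z) := rfl
  rw [hstep]
  refine ⟨⟨le_of_lt K.2.1, hy, hz, by linear_combination hl⟩, ?_⟩
  rcases lt_or_ge (y*z) (2*x) with hbad | hok
  · cases hr with
    | base => exact absurd hΔ.1 (by dsimp only; linarith)
    | s1 _ h hr' => rw [hstep] at hr'; exact hr'
    | s2 _ h hr' => exact absurd h (by dsimp only; intro h'; exact obad hy hz hbad h')
    | s3 _ h hr' => exact absurd h (by dsimp only; intro h'; exact obad hx hy h' hbad)
  · rcases eq_or_lt_of_le hok with heq | hlt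
    · have hxx : y*z - x = x := by linarith
      rw [hxx]; exact hr
    · refine Reach.s1 (y*z-x, y, z) (by dsimp only; linarith) ?_
      have h2 : phi1 (y*z-x, y, z) = (y*z-(y*z-x), y, z) := rfl
      rw [h2, show y*z-(y*z-x) = x by ring]
      exact hr

lemma step_phi3 {κ : ℝ} (hκ₂ : κ < 2) {q0 p : ℝ × ℝ × ℝ} (hΔ : InD q0)
    (hg : IsGood κ p) (hr : Reach q0 p) :
    IsGood κ (phi3 p) ∧ Reach q0 (phi3 p) := by
  obtain ⟨x, y, z⟩ := p
  obtain ⟨hx, hy, hz, hl⟩ := hg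
  dsimp only at hx hy hz hl
  have K := key hκ₂ hy hz hx (by linear_combination hl)
  have hstep : phi3 (x,y,z) = (x, x*z-y, z) := rfl
  rw [hstep]
  refine ⟨⟨hx, by dsimp only; linarith [K.2.1], hz, by linear_combination hl⟩, ?_⟩
  rcases lt_or_ge (z*x) (2*y) with hbad | hok
  · cases hr with
    | base => exact absurd hΔ.2.1 (by dsimp only; linarith)
    | s2 _ h hr' => rw [hstep] at hr'; exact hr'
    | s1 _ h hr' => exact absurd h (by dsimp only; intro h'; exact obad hy hz h' hbad)
    | s3 _ h hr' => exact absurd h (by dsimp only; intro h'; exact obad hz hx hbad h')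
  · rcases eq_or_lt_of_le hok with heq | hlt
    · have hyy : x*z - y = y := by linarith
      rw [hyy]; exact hr
    · refine Reach.s2 (x, x*z-y, z) (by dsimp only; linarith) ?_
      have h2 : phi3 (x, x*z-y, z) = (x, x*z-(x*z-y), z) := rfl
      rw [h2, show x*z-(x*z-y) = y by ring]
      exact hr

lemma step_phi2 {κ : ℝ} (hκ₂ : κ < 2) {q0 p : ℝ × ℝ × ℝ} (hΔ : InD q0)
    (hg : IsGood κ p) (hr : Reach q0 p) :
    IsGood κ (phi2 p) ∧ Reach q0 (phi2 p) := by
  obtain ⟨x, y, z⟩ := p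
  obtain ⟨hx, hy, hz, hl⟩ := hg
  dsimp only at hx hy hz hl
  have K := key hκ₂ hz hx hy (by linear_combination hl)
  have hstep : phi2 (x,y,z) = (x, y, x*y-z) := rfl
  rw [hstep]
  refine ⟨⟨hx, hy, by dsimp only; linarith [K.2.1], by linear_combination hl⟩, ?_⟩
  rcases lt_or_ge (x*y) (2*z) with hbad | hok
  · cases hr with
    | base => exact absurd hΔ.2.2 (by dsimp only; linarith)
    | s3 _ h hr' => rw [hstep] at hr'; exact hr'
    | s1 _ h hr' => exact absurd h (by dsimp only; intro h'; exact obad hx hy hbad h')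
    | s2 _ h hr' => exact absurd h (by dsimp only; intro h'; exact obad hz hx h' hbad)
  · rcases eq_or_lt_of_le hok with heq | hlt
    · have hzz : x*y - z = z := by linarith
      rw [hzz]; exact hr
    · refine Reach.s3 (x, y, x*y-z) (by dsimp only; linarith) ?_
      have h2 : phi2 (x, y, x*y-z) = (x, y, x*y-(x*y-z)) := rfl
      rw [h2, show x*y-(x*y-z) = z by ring]
      exact hr

lemma closure_transport {κ : ℝ} (hκ₂ : κ < 2) {q0 : ℝ × ℝ × ℝ} (hΔ : InD q0)
    {g : Equiv.Perm (ℝ × ℝ × ℝ)} (hgm : g ∈ Subgroup.closure {phi1, phi2, phi3}) :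
    ∀ p, IsGood κ p → Reach q0 p → IsGood κ (g p) ∧ Reach q0 (g p) := by
  let P : Equiv.Perm (ℝ × ℝ × ℝ) → Prop :=
    fun g => ∀ p, IsGood κ p → Reach q0 p → IsGood κ (g p) ∧ Reach q0 (g p)
  have main : P g ∧ P g⁻¹ := by
    refine Subgroup.closure_induction (p := fun g _ => P g ∧ P g⁻¹) ?_ ?_ ?_ ?_ hgm
    · rintro f (rfl | rfl | rfl)
      · exact ⟨fun p hp hr => step_phi1 hκ₂ hΔ hp hr,
          by rw [show phi1⁻¹ = phi1 from rfl]; exact fun p hp hr => step_phi1 hκ₂ hΔ hp hr⟩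
      · exact ⟨fun p hp hr => step_phi2 hκ₂ hΔ hp hr,
          by rw [show phi2⁻¹ = phi2 from rfl]; exact fun p hp hr => step_phi2 hκ₂ hΔ hp hr⟩
      · exact ⟨fun p hp hr => step_phi3 hκ₂ hΔ hp hr,
          by rw [show phi3⁻¹ = phi3 from rfl]; exact fun p hp hr => step_phi3 hκ₂ hΔ hp hr⟩
    · constructor <;> exact fun p hp hr => by simpa using ⟨hp, hr⟩
    · rintro a b _ _ ⟨ha, ha'⟩ ⟨hb, hb'⟩
      constructor
      · intro p hp hr
        have h1 := hb p hp hr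
        have h2 := ha _ h1.1 h1.2
        simpa [Equiv.Perm.mul_apply] using h2
      · intro p hp hr
        have h1 := ha' p hp hr
        have h2 := hb' _ h1.1 h1.2
        rw [mul_inv_rev]
        simpa [Equiv.Perm.mul_apply] using h2
    · rintro a _ ⟨ha, ha'⟩
      exact ⟨ha', by simpa using ha⟩
  exact main.1

end Stmt17

open Stmt17 in
/-- Fundamental domain for the mapping class group action on the Teichmüller component
of the one-holed torus character variety with boundary trace `κ ∈ (−2,2)`: for every point
`(x,y,z)` with `x,y,z ≥ 2` on the level set `x² + y² + z² − xyz − 2 = κ`, the orbit under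
the group generated by `φ₁, φ₂, φ₃` contains exactly one point `(x′,y′,z′)` with
`2x′ ≤ y′z′`, `2y′ ≤ z′x′`, `2z′ ≤ x′y′` (i.e. with homogeneous coordinates in `(0,1/2]`). -/
theorem stmt_17 (κ : ℝ) (hκ₁ : -2 < κ) (hκ₂ : κ < 2) (x y z : ℝ)
    (hx : 2 ≤ x) (hy : 2 ≤ y) (hz : 2 ≤ z)
    (h : x ^ 2 + y ^ 2 + z ^ 2 - x * y * z - 2 = κ) :
    ∃! p : ℝ × ℝ × ℝ,
      (∃ g ∈ Subgroup.closure {phi1, phi2, phi3}, g (x, y, z) = p) ∧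
      2 * p.1 ≤ p.2.1 * p.2.2 ∧ 2 * p.2.1 ≤ p.2.2 * p.1 ∧ 2 * p.2.2 ≤ p.1 * p.2.1 := by
  have hg0 : IsGood κ (x,y,z) := ⟨hx, hy, hz, by dsimp only; linear_combination h⟩
  have hS : (0:ℝ) < x + y + z := by linarith
  have hε : (0:ℝ) < 2*(2-κ)/(x+y+z) := div_pos (by linarith) hS
  obtain ⟨n, hn⟩ := exists_nat_ge ((x + y + z - 6)/(2*(2-κ)/(x+y+z)))
  have hsum : x + y + z ≤ 6 + n * (2*(2-κ)/(x+y+z)) := by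
    rw [div_le_iff₀ hε] at hn
    linarith
  obtain ⟨q0, hgq0, hΔ, hR⟩ := exist_aux hκ₂ (x+y+z) hS n x y z hg0 le_rfl hsum
  obtain ⟨g, hgmem, hgeq⟩ := reach_exists_g hR
  refine ⟨q0, ⟨⟨g, hgmem, hgeq⟩, hΔ.1, hΔ.2.1, hΔ.2.2⟩, ?_⟩
  rintro q ⟨⟨g', hg', rfl⟩, hq1, hq2, hq3⟩
  have h2 := (closure_transport hκ₂ hΔ hg' (x,y,z) hg0 hR).2
  cases h2 with
  | base => rfl
  | s1 _ hf _ => exact absurd hq1 (by linarith)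
  | s2 _ hf _ => exact absurd hq2 (by linarith)
  | s3 _ hf _ => exact absurd hq3 (by linarith)
end

section
/- Let θ ∈ [0,2π) and set κ = −2·cos(θ/2). Then the iterated integral ∫₀^{1/2} ( ∫_{(1−2s)/(2−(κ+2)s)}^{1/2} 1/((1−r−s)·r·s) dr ) ds equals (1/2)·(π² − θ²/4). -/
open Real MeasureTheory intervalIntegral Set Filter
open scoped Interval

/-- The integrand of the outer integral after the inner `r`-integral has been evaluated. -/
noncomputable def gg (c s : ℝ) : ℝ :=
  (Real.log (1 - c * s * (1 - s)) - 2 * Real.log (1 - 2 * s)) / (s * (1 - s))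

/-- The outer integral as a function of the parameter `c = κ + 2`. -/
noncomputable def JJ (c : ℝ) : ℝ := ∫ s in (0:ℝ)..(1/2), gg c s

lemma gg_meas (c : ℝ) : Measurable (gg c) := by
  unfold gg
  exact ((Real.measurable_log.comp (by fun_prop)).sub
    ((Real.measurable_log.comp (by fun_prop)).const_mul 2)).div (by fun_prop)

lemma ae_ne_half : ∀ᵐ s : ℝ, s ≠ (1/2 : ℝ) := by
  have h : (volume : Measure ℝ) {(1/2 : ℝ)} = 0 := Real.volume_singleton
  simpa using measure_eq_zero_iff_ae_notMem.mp h

lemma ae_mem_Ioo : ∀ᵐ s : ℝ, s ∈ Ι (0:ℝ) (1/2) → s ∈ Set.Ioo (0:ℝ) (1/2) := by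
  filter_upwards [ae_ne_half] with s hs hmem
  rw [Set.uIoc_of_le (by norm_num : (0:ℝ) ≤ 1/2)] at hmem
  exact ⟨hmem.1, lt_of_le_of_ne hmem.2 hs⟩

/-- Uniform dominating bound for `gg c` on `(0, 1/2)`, valid for all `c ∈ [0,4]`. -/
lemma gg_bound {c s : ℝ} (hc0 : 0 ≤ c) (hc4 : c ≤ 4) (hs : s ∈ Set.Ioo (0:ℝ) (1/2)) :
    |gg c s| ≤ 32/3 + 32 * (1 - 2*s) ^ (-(1/2) : ℝ) := by
  obtain ⟨h0, h1⟩ := hs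
  have h2s : 0 < 1 - 2*s := by linarith
  have hm : 0 < s * (1 - s) := by nlinarith
  have hsq : (0:ℝ) < (1 - 2*s)^2 := by positivity
  have hN : 0 < 1 - c * s * (1 - s) := by nlinarith [mul_nonneg hc0 (sq_nonneg (1 - 2*s))]
  have hlow : 2 * Real.log (1 - 2*s) ≤ Real.log (1 - c * s * (1 - s)) := by
    have h := (Real.log_le_log_iff hsq hN).mpr (by nlinarith)
    rwa [Real.log_pow, Nat.cast_ofNat] at h
  have hup : Real.log (1 - c * s * (1 - s)) ≤ 0 :=
    Real.log_nonpos hN.le (by nlinarith [mul_nonneg hc0 hm.le])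
  have hlog0 : Real.log (1 - 2*s) ≤ 0 := Real.log_nonpos h2s.le (by linarith)
  have habs : |Real.log (1 - c * s * (1 - s)) - 2 * Real.log (1 - 2*s)|
      ≤ -2 * Real.log (1 - 2*s) := by
    rw [abs_le]; constructor <;> linarith
  have hgg : |gg c s| ≤ (-2 * Real.log (1 - 2*s)) / (s * (1 - s)) := by
    rw [gg, abs_div, abs_of_pos hm]
    exact (div_le_div_iff_of_pos_right hm).mpr habs
  have hy : (0:ℝ) < (1 - 2*s) ^ (-(1/2) : ℝ) := Real.rpow_pos_of_pos h2s _
  rcases le_or_gt s (1/4) with hq | hq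
  · -- small s : bound by 32/3
    have h := Real.log_le_sub_one_of_pos (inv_pos.mpr h2s)
    rw [Real.log_inv] at h
    -- h : -log (1-2s) ≤ (1-2s)⁻¹ - 1
    have h2 : (1 - 2*s)⁻¹ - 1 = 2*s/(1 - 2*s) := by field_simp; ring
    rw [h2] at h
    have hB : -2 * Real.log (1 - 2*s) ≤ 32/3 * (s * (1 - s)) := by
      have h3 : 2*s/(1 - 2*s) ≤ 16/3 * (s * (1 - s)) := by
        rw [div_le_iff₀ h2s]; nlinarith
      linarith
    have : (-2 * Real.log (1 - 2*s)) / (s * (1 - s)) ≤ 32/3 := by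
      rw [div_le_iff₀ hm]; linarith
    nlinarith [hgg, hy]
  · -- large s : bound by 32 * (1-2s)^(-1/2)
    have hm8 : 1/8 ≤ s * (1 - s) := by
      nlinarith [mul_nonneg (by linarith : (0:ℝ) ≤ s - 1/4) (by linarith : (0:ℝ) ≤ 1/2 - s)]
    have hylog : -Real.log (1 - 2*s) ≤ 2 * ((1 - 2*s) ^ (-(1/2) : ℝ)) := by
      have hlogy : Real.log ((1 - 2*s) ^ (-(1/2) : ℝ)) = -(1/2) * Real.log (1 - 2*s) :=
        Real.log_rpow h2s _
      have h := Real.log_le_sub_one_of_pos hy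
      rw [hlogy] at h
      linarith
    have hnn : 0 ≤ -2 * Real.log (1 - 2*s) := by linarith
    have hstep : (-2 * Real.log (1 - 2*s)) / (s * (1 - s)) ≤ (-2 * Real.log (1 - 2*s)) * 8 := by
      rw [div_le_iff₀ hm]; nlinarith
    calc |gg c s| ≤ (-2 * Real.log (1 - 2*s)) / (s * (1 - s)) := hgg
      _ ≤ (-2 * Real.log (1 - 2*s)) * 8 := hstep
      _ ≤ 32/3 + 32 * (1 - 2*s) ^ (-(1/2) : ℝ) := by nlinarith [hylog]

lemma DD_int : IntervalIntegrable (fun s : ℝ => 32/3 + 32 * (1 - 2*s) ^ (-(1/2) : ℝ))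
    volume 0 (1/2) := by
  have h1 : IntervalIntegrable (fun x : ℝ => x ^ (-(1/2) : ℝ)) volume 1 0 :=
    intervalIntegral.intervalIntegrable_rpow' (by norm_num)
  have h2 := (h1.comp_sub_left 1).comp_mul_left (c := 2) enorm_ne_top enorm_ne_top
  norm_num at h2
  exact intervalIntegrable_const.add (h2.const_mul 32)

lemma gg_int {c : ℝ} (hc0 : 0 ≤ c) (hc4 : c ≤ 4) : IntervalIntegrable (gg c) volume 0 (1/2) := by
  rw [intervalIntegrable_iff]
  have hD := DD_int
  rw [intervalIntegrable_iff] at hD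
  refine hD.mono' (gg_meas c).aestronglyMeasurable ?_
  filter_upwards [ae_restrict_of_ae ae_mem_Ioo, ae_restrict_mem measurableSet_uIoc]
    with s hIoo hmem
  rw [Real.norm_eq_abs]
  exact gg_bound hc0 hc4 (hIoo hmem)

/-- Evaluation of the inner `r`-integral. -/
lemma inner_eq {c s : ℝ} (hc0 : 0 ≤ c) (hc4 : c < 4) (hs : s ∈ Set.Ioo (0:ℝ) (1/2)) :
    (∫ r in ((1 - 2 * s) / (2 - c * s))..(1/2), 1 / ((1 - r - s) * r * s)) = gg c s := by
  obtain ⟨h0, h1⟩ := hs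
  have h2s : 0 < 1 - 2*s := by linarith
  have hm : 0 < s * (1 - s) := by nlinarith
  have hd : 0 < 2 - c*s := by nlinarith [mul_nonneg (by linarith : (0:ℝ) ≤ 4 - c) h0.le]
  set r0 := (1 - 2 * s) / (2 - c * s) with hr0
  have hr0pos : 0 < r0 := div_pos h2s hd
  have hr0le : r0 ≤ 1/2 := by
    rw [hr0, div_le_iff₀ hd]; nlinarith [mul_nonneg (by linarith : (0:ℝ) ≤ 4 - c) h0.le]
  have hN : 0 < 1 - c*s*(1-s) := by nlinarith [mul_nonneg hc0 (sq_nonneg (1 - 2*s))]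
  have hIcc : Set.uIcc r0 (1/2 : ℝ) = Set.Icc r0 (1/2) := Set.uIcc_of_le hr0le
  have hderiv : ∀ r ∈ Set.uIcc r0 (1/2 : ℝ),
      HasDerivAt (fun r => (Real.log r - Real.log (1 - s - r)) / (s * (1 - s)))
        (1 / ((1 - r - s) * r * s)) r := by
    intro r hr
    rw [hIcc] at hr
    have hrpos : 0 < r := lt_of_lt_of_le hr0pos hr.1
    have hrr : 0 < 1 - s - r := by
      have := hr.2; linarith
    have hd1 : HasDerivAt (fun r : ℝ => 1 - s - r) (-1) r := by
      simpa using (hasDerivAt_id r).const_sub (1 - s)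
    have hlog2 : HasDerivAt (fun r : ℝ => Real.log (1 - s - r)) (-1 / (1 - s - r)) r :=
      hd1.log hrr.ne'
    have hfull := ((Real.hasDerivAt_log hrpos.ne').sub hlog2).div_const (s * (1 - s))
    refine hfull.congr_deriv ?_
    have hrs : (0:ℝ) < 1 - r - s := by linarith
    have hval : r⁻¹ - -1 / (1 - s - r) = (1 - s) / (r * (1 - s - r)) := by
      field_simp [hrpos.ne', hrr.ne']
      ring
    rw [hval, div_div, div_eq_div_iff (by positivity) (by positivity)]
    ring
  have hint : IntervalIntegrable (fun r => 1 / ((1 - r - s) * r * s)) volume r0 (1/2) := by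
    apply ContinuousOn.intervalIntegrable
    apply ContinuousOn.div continuousOn_const (by fun_prop)
    intro r hr
    rw [hIcc] at hr
    have hrpos : 0 < r := lt_of_lt_of_le hr0pos hr.1
    have hrr : 0 < 1 - r - s := by have := hr.2; linarith
    exact ne_of_gt (by positivity)
  rw [integral_eq_sub_of_hasDerivAt hderiv hint]
  have e0 : Real.log ((1:ℝ)/2) = -Real.log 2 := by rw [one_div, Real.log_inv]
  have e1 : Real.log (1 - s - 1/2) = Real.log (1 - 2*s) - Real.log 2 := by
    rw [show 1 - s - (1/2 : ℝ) = (1 - 2*s)/2 by ring, Real.log_div h2s.ne' two_ne_zero]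
  have e2 : Real.log r0 = Real.log (1 - 2*s) - Real.log (2 - c*s) := by
    rw [hr0, Real.log_div h2s.ne' hd.ne']
  have hr0c : 1 - s - r0 = (1 - c*s*(1-s)) / (2 - c*s) := by
    rw [hr0, eq_div_iff hd.ne', sub_mul, div_mul_cancel₀ _ hd.ne']; ring
  have e3 : Real.log (1 - s - r0) = Real.log (1 - c*s*(1-s)) - Real.log (2 - c*s) := by
    rw [hr0c, Real.log_div hN.ne' hd.ne']
  show (Real.log (1/2) - Real.log (1 - s - 1/2)) / (s * (1 - s))
      - (Real.log r0 - Real.log (1 - s - r0)) / (s * (1 - s)) = gg c s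
  rw [gg, e0, e1, e2, e3]
  ring

/-- derivative of `gg` in the parameter `c`. -/
lemma gg_hasDerivAt {x t : ℝ} (hm : 0 < t * (1 - t)) (hx : 0 < 1 - x * t * (1 - t)) :
    HasDerivAt (fun c => gg c t) (-(1 - x * t * (1 - t))⁻¹) x := by
  have h1 : HasDerivAt (fun c : ℝ => 1 - c * t * (1 - t)) (-(t * (1 - t))) x := by
    simpa using (((hasDerivAt_id x).mul_const t).mul_const (1 - t)).const_sub 1
  have h2 := (h1.log hx.ne').sub_const (2 * Real.log (1 - 2 * t))
  have h3 := h2.div_const (t * (1 - t))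
  have hfun : (fun c => gg c t)
      = fun c => (Real.log (1 - c * t * (1 - t)) - 2 * Real.log (1 - 2 * t)) / (t * (1 - t)) :=
    rfl
  rw [hfun]
  refine h3.congr_deriv ?_
  rw [div_right_comm, neg_div, div_self hm.ne', neg_div, one_div]

lemma Kcont {c : ℝ} (hc0 : 0 ≤ c) (hc4 : c < 4) :
    Continuous (fun t : ℝ => -(1 - c * t * (1 - t))⁻¹) := by
  have hpos : ∀ t : ℝ, 0 < 1 - c * t * (1 - t) := by
    intro t; nlinarith [mul_nonneg hc0 (sq_nonneg (1 - 2*t))]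
  exact ((continuous_const.sub (by fun_prop)).inv₀ fun t => (hpos t).ne').neg

lemma K_val {φ : ℝ} (hφ1 : 0 < φ) (hφ2 : φ < π/2) :
    (∫ t in (0:ℝ)..(1/2), -(1 - 4 * sin φ ^ 2 * t * (1 - t))⁻¹)
      = -(φ * (2 * sin φ * cos φ)⁻¹) := by
  have hπ := Real.pi_pos
  have hsφ : 0 < sin φ := Real.sin_pos_of_pos_of_lt_pi hφ1 (by linarith)
  have hcφ : 0 < cos φ := Real.cos_pos_of_mem_Ioo ⟨by linarith, hφ2⟩
  have hpyth := Real.sin_sq_add_cos_sq φ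
  have hc0 : (0:ℝ) ≤ 4 * sin φ ^ 2 := by positivity
  have hc4 : 4 * sin φ ^ 2 < 4 := by nlinarith
  have hderiv : ∀ t ∈ Set.uIcc (0:ℝ) (1/2),
      HasDerivAt (fun t => (2 * sin φ * cos φ)⁻¹ * Real.arctan (Real.tan φ * (1 - 2 * t)))
        (-(1 - 4 * sin φ ^ 2 * t * (1 - t))⁻¹) t := by
    intro t _
    have hinner : HasDerivAt (fun t : ℝ => Real.tan φ * (1 - 2 * t)) (Real.tan φ * (-2)) t := by
      simpa using (((hasDerivAt_id t).const_mul 2).const_sub 1).const_mul (Real.tan φ)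
    have harc := (Real.hasDerivAt_arctan (Real.tan φ * (1 - 2 * t))).comp t hinner
    have hfin := harc.const_mul ((2 * sin φ * cos φ)⁻¹)
    refine hfin.congr_deriv ?_
    have hden : 1 - 4 * sin φ ^ 2 * t * (1 - t) = cos φ ^ 2 + sin φ ^ 2 * (1 - 2*t) ^ 2 := by
      linear_combination (-1 : ℝ) * hpyth
    have hCS : 0 < cos φ ^ 2 + sin φ ^ 2 * (1 - 2*t) ^ 2 := by positivity
    rw [hden, Real.tan_eq_sin_div_cos]
    field_simp
  have hint : IntervalIntegrable (fun t => -(1 - 4 * sin φ ^ 2 * t * (1 - t))⁻¹)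
      volume 0 (1/2) := (Kcont hc0 hc4).intervalIntegrable _ _
  rw [integral_eq_sub_of_hasDerivAt hderiv hint]
  have e1 : Real.tan φ * (1 - 2 * (1/2 : ℝ)) = 0 := by norm_num
  have e2 : Real.tan φ * (1 - 2 * (0 : ℝ)) = Real.tan φ := by norm_num
  show (2 * sin φ * cos φ)⁻¹ * Real.arctan (Real.tan φ * (1 - 2 * (1/2:ℝ)))
      - (2 * sin φ * cos φ)⁻¹ * Real.arctan (Real.tan φ * (1 - 2 * (0:ℝ))) = _
  rw [e1, e2, Real.arctan_zero, Real.arctan_tan (by linarith) hφ2]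
  ring

lemma JJ_hasDeriv {c₀ : ℝ} (hc : c₀ ∈ Set.Ico (0:ℝ) 4) :
    HasDerivAt JJ (∫ t in (0:ℝ)..(1/2), -(1 - c₀ * t * (1 - t))⁻¹) c₀ := by
  obtain ⟨hc0, hc4⟩ := hc
  have hεpos : 0 < (4 - c₀)/2 := by linarith
  have hball : ∀ x ∈ Metric.ball c₀ ((4 - c₀)/2), ∀ t ∈ Ι (0:ℝ) (1/2),
      1 - (c₀ + (4 - c₀)/2)/4 ≤ 1 - x * t * (1 - t) := by
    intro x hx t ht
    rw [Set.uIoc_of_le (by norm_num : (0:ℝ) ≤ 1/2)] at ht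
    have ht0 : 0 < t := ht.1
    have ht2 : t ≤ 1/2 := ht.2
    have hmt : 0 ≤ t * (1 - t) := by nlinarith
    have hmt4 : t * (1 - t) ≤ 1/4 := by nlinarith [sq_nonneg (1 - 2*t)]
    have hxlt : x < c₀ + (4 - c₀)/2 := by
      have h := Metric.mem_ball.mp hx
      rw [Real.dist_eq, abs_lt] at h
      linarith [h.2]
    rcases le_or_gt x 0 with h | h
    · nlinarith [mul_nonpos_of_nonpos_of_nonneg h hmt]
    · nlinarith [mul_le_mul_of_nonneg_left hmt4 h.le]
  have h14 : 0 < 1 - (c₀ + (4 - c₀)/2)/4 := by linarith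
  have key := intervalIntegral.hasDerivAt_integral_of_dominated_loc_of_deriv_le
    (F := fun c s => gg c s) (F' := fun x t => -(1 - x * t * (1 - t))⁻¹)
    (bound := fun _ => (1 - (c₀ + (4 - c₀)/2)/4)⁻¹) (a := 0) (b := 1/2)
    (μ := volume) (Metric.ball_mem_nhds c₀ hεpos)
    (Filter.Eventually.of_forall fun x => (gg_meas x).aestronglyMeasurable)
    (gg_int hc0 hc4.le)
    (Kcont hc0 hc4).aestronglyMeasurable
    ?_ intervalIntegrable_const ?_
  · exact key.2
  · refine Filter.Eventually.of_forall fun t => fun ht x hx => ?_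
    have hge := hball x hx t ht
    have hpos : 0 < 1 - x * t * (1 - t) := lt_of_lt_of_le h14 hge
    rw [Real.norm_eq_abs, abs_neg, abs_inv, abs_of_pos hpos]
    exact inv_anti₀ h14 hge
  · refine Filter.Eventually.of_forall fun t => fun ht x hx => ?_
    have hge := hball x hx t ht
    have hpos : 0 < 1 - x * t * (1 - t) := lt_of_lt_of_le h14 hge
    have hmt : 0 < t * (1 - t) := by
      rw [Set.uIoc_of_le (by norm_num : (0:ℝ) ≤ 1/2)] at ht
      nlinarith [ht.1, ht.2]
    exact gg_hasDerivAt hmt hpos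

lemma JJ_contOn : ContinuousOn JJ (Set.Icc (0:ℝ) 4) := by
  intro c₀ hc₀
  apply intervalIntegral.continuousWithinAt_of_dominated_interval
    (bound := fun s => 32/3 + 32 * (1 - 2*s) ^ (-(1/2) : ℝ))
  · exact Filter.Eventually.of_forall fun x => (gg_meas x).aestronglyMeasurable
  · apply eventually_nhdsWithin_of_forall
    intro c hc
    filter_upwards [ae_mem_Ioo] with s hs hmem
    rw [Real.norm_eq_abs]
    exact gg_bound hc.1 hc.2 (hs hmem)
  · exact DD_int
  · filter_upwards [ae_mem_Ioo] with s hs hmem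
    obtain ⟨h0, h1⟩ := hs hmem
    have hm : 0 < s * (1 - s) := by nlinarith
    have hm4 : s * (1 - s) < 1/4 := by nlinarith [sq_nonneg (1 - 2*s), (by linarith : 0 < 1 - 2*s)]
    have hpos : 0 < 1 - c₀ * s * (1 - s) := by
      nlinarith [mul_le_mul_of_nonneg_right hc₀.2 hm.le, hc₀.1]
    have hcont : ContinuousAt (fun c => gg c s) c₀ := by
      simp only [gg]
      apply ContinuousAt.div_const
      apply ContinuousAt.sub ?_ continuousAt_const
      have hc1 : ContinuousAt (fun c : ℝ => 1 - c * s * (1 - s)) c₀ := by fun_prop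
      exact hc1.log hpos.ne'
    exact hcont.continuousWithinAt

lemma JJ_four : JJ 4 = 0 := by
  have h : ∀ᵐ s : ℝ, s ∈ Ι (0:ℝ) (1/2) → gg 4 s = (0 : ℝ) := by
    filter_upwards [ae_mem_Ioo] with s hs hmem
    obtain ⟨h0, h1⟩ := hs hmem
    have heq : (1:ℝ) - 4 * s * (1 - s) = (1 - 2*s)^2 := by ring
    rw [gg, heq, Real.log_pow]
    norm_num
  have := intervalIntegral.integral_congr_ae (g := fun _ => (0:ℝ)) h
  simpa [JJ] using this

/-- Weil–Petersson volume integral for the one-holed torus with a cone point of angle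
`θ ∈ [0,2π)`: with `κ = −2cos(θ/2)`, the integral of the Weil–Petersson form
`dr∧ds/((1−r−s)rs)` over the fundamental domain
`{(r,s) : s ∈ (0,1/2], r ∈ ((1−2s)/(2−(κ+2)s), 1/2]}` equals `(1/2)(π² − θ²/4)`. -/
theorem stmt_18 (θ κ : ℝ) (h0 : 0 ≤ θ) (h2 : θ < 2 * π) (hκ : κ = -2 * cos (θ / 2)) :
    (∫ s in (0 : ℝ)..(1 / 2),
        ∫ r in ((1 - 2 * s) / (2 - (κ + 2) * s))..(1 / 2), 1 / ((1 - r - s) * r * s)) =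
      (1 / 2) * (π ^ 2 - θ ^ 2 / 4) := by
  have hπ : 0 < π := Real.pi_pos
  have hφ : θ/4 ∈ Set.Ico (0:ℝ) (π/2) := ⟨by linarith, by linarith⟩
  have hcs : κ + 2 = 4 * sin (θ/4) ^ 2 := by
    rw [hκ, show θ/2 = 2*(θ/4) by ring, Real.cos_two_mul']
    linear_combination (-2 : ℝ) * Real.sin_sq_add_cos_sq (θ/4)
  have hmem : ∀ φ ∈ Set.Ico (0:ℝ) (π/2), 4 * sin φ ^ 2 ∈ Set.Ico (0:ℝ) 4 := by
    intro φ hφ'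
    have hs1 : sin φ < 1 := by
      have h := Real.strictMonoOn_sin
        (Set.mem_Icc.mpr ⟨by linarith [hφ'.1], hφ'.2.le⟩)
        (Set.mem_Icc.mpr ⟨by linarith, le_refl (π/2)⟩) hφ'.2
      simpa [Real.sin_pi_div_two] using h
    have hs0 : 0 ≤ sin φ := Real.sin_nonneg_of_nonneg_of_le_pi hφ'.1 (by linarith [hφ'.2])
    exact ⟨by positivity, by nlinarith⟩
  obtain ⟨hc0, hc4⟩ : κ + 2 ∈ Set.Ico (0:ℝ) 4 := hcs ▸ hmem (θ/4) hφ
  -- rewrite LHS as JJ (κ + 2)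
  have hLHS : (∫ s in (0 : ℝ)..(1 / 2),
      ∫ r in ((1 - 2 * s) / (2 - (κ + 2) * s))..(1 / 2), 1 / ((1 - r - s) * r * s))
      = JJ (κ + 2) := by
    rw [show JJ (κ + 2) = ∫ s in (0:ℝ)..(1/2), gg (κ + 2) s from rfl]
    apply intervalIntegral.integral_congr_ae
    filter_upwards [ae_mem_Ioo] with s hs hmem'
    exact inner_eq hc0 hc4 (hs hmem')
  -- constancy of the function u φ = JJ (4 sin² φ) + 2 φ²
  have hcont : ContinuousOn (fun φ => JJ (4 * sin φ ^ 2) + 2 * φ ^ 2) (Set.Icc 0 (π/2)) := by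
    apply ContinuousOn.add
    · apply JJ_contOn.comp (Continuous.continuousOn (by fun_prop))
      intro φ _
      have h1 : sin φ ^ 2 ≤ 1 := by nlinarith [Real.neg_one_le_sin φ, Real.sin_le_one φ]
      simp only [Set.mem_Icc]
      exact ⟨by positivity, by nlinarith⟩
    · exact Continuous.continuousOn (by fun_prop)
  have hder : ∀ φ₀ ∈ Set.Ico (0:ℝ) (π/2),
      HasDerivWithinAt (fun φ => JJ (4 * sin φ ^ 2) + 2 * φ ^ 2) 0 (Set.Ici φ₀) φ₀ := by
    intro φ₀ hφ₀
    have hJd := JJ_hasDeriv (hmem φ₀ hφ₀)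
    have hsin : HasDerivAt (fun φ => 4 * sin φ ^ 2) (8 * sin φ₀ * cos φ₀) φ₀ := by
      have h := ((Real.hasDerivAt_sin φ₀).pow 2).const_mul 4
      refine h.congr_deriv ?_
      push_cast
      ring
    have hcomp := hJd.comp φ₀ hsin
    have hquad : HasDerivAt (fun φ : ℝ => 2 * φ ^ 2) (4 * φ₀) φ₀ := by
      have h := (hasDerivAt_pow 2 φ₀).const_mul 2
      refine h.congr_deriv ?_
      push_cast
      ring
    have hsum := hcomp.add hquad
    have hval : (∫ t in (0:ℝ)..(1/2), -(1 - 4 * sin φ₀ ^ 2 * t * (1 - t))⁻¹)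
        * (8 * sin φ₀ * cos φ₀) + 4 * φ₀ = 0 := by
      rcases eq_or_lt_of_le hφ₀.1 with h | h
      · rw [← h]; simp
      · rw [K_val h hφ₀.2]
        have hsφ : 0 < sin φ₀ := Real.sin_pos_of_pos_of_lt_pi h (by linarith [hφ₀.2])
        have hcφ : 0 < cos φ₀ := Real.cos_pos_of_mem_Ioo ⟨by linarith, hφ₀.2⟩
        field_simp
        ring
    rw [hval] at hsum
    exact (hsum.congr_deriv rfl).hasDerivWithinAt
  have hconst := constant_of_has_deriv_right_zero hcont hder
  have hθ4 := hconst (θ/4) ⟨hφ.1, hφ.2.le⟩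
  have hπ2 := hconst (π/2) (Set.right_mem_Icc.mpr (by linarith))
  have e := hθ4.trans hπ2.symm
  rw [Real.sin_pi_div_two] at e
  norm_num at e
  rw [JJ_four] at e
  rw [hLHS, hcs]
  linear_combination e
end
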